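/- Let L ≥ 1 and let d₀, d₁, …, d_L be positive integers with d_L = K. For p = 1,…,L let W⁽ᵖ⁾ ∈ ℝ^{d_p × d_{p−1}} be weight matrices, let x = x⁽¹⁾ ∈ ℝ^{d₀}, define pre-activations z⁽ᵖ⁾ = W⁽ᵖ⁾x⁽ᵖ⁾ and activations x⁽ᵖ⁺¹⁾ = D⁽ᵖ⁾z⁽ᵖ⁾, where D⁽ᵖ⁾ = diag(𝟙[z⁽ᵖ⁾ ≥ 0]) is the diagonal 0/1 matrix of the ReLU pattern. Set G⁽ᴸ⁾ = I_K and, for p < L, G⁽ᵖ⁾ = W⁽ᴸ⁾D⁽ᴸ⁻¹⁾W⁽ᴸ⁻¹⁾⋯W⁽ᵖ⁺¹⁾D⁽ᵖ⁾. Let F be the matrix with K rows whose transpose Fᵀ stacks vertically, for p = 1,…,L, the two blocks (G⁽ᵖ⁾)ᵀ ⊗ x⁽ᵖ⁾ and (G⁽ᵖ⁾)ᵀ. Let p ∈ ℝ^K be a probability vector (all entries nonnegative, summing to 1), A = diag(p) − ppᵀ, and H = FᵀAF. If ‖W⁽ᵖ⁾‖₂ ≤ M_W for all p with M_W > 1,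 and ‖x‖₂ ≤ M_x, then ‖H‖₂ ≤ L·√2·M_x²·M_W^{2L} + √2·M_W²(M_W^{2L} − 1)/(M_W² − 1). -/

import Mathlib

open Matrix BigOperators

/-- The spectral norm (ℓ² operator norm) of a real matrix. -/
noncomputable def matrixSpectralNorm {m n : Type*} [Fintype m] [Fintype n] [DecidableEq n]
    (A : Matrix m n ℝ) : ℝ :=
  ‖LinearMap.toContinuousLinearMap (Matrix.toEuclideanLin A)‖

/-- The Euclidean norm of a real vector. -/
noncomputable def eNorm {n : Type*} [Fintype n] (x : n → ℝ) : ℝ :=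
  Real.sqrt (∑ i, x i ^ 2)

section Aux

open scoped Matrix.Norms.L2Operator

variable {m n k : Type*} [Fintype m] [Fintype n] [Fintype k]

lemma spectral_def [DecidableEq n] (A : Matrix m n ℝ) : matrixSpectralNorm A = ‖A‖ := rfl

lemma eNorm_eq_norm (x : n → ℝ) : eNorm x = ‖(WithLp.equiv 2 (n → ℝ)).symm x‖ := by
  rw [EuclideanSpace.norm_eq]
  simp [eNorm, sq_abs]

lemma eNorm_nonneg (x : n → ℝ) : 0 ≤ eNorm x := Real.sqrt_nonneg _

lemma eNorm_sq (x : n → ℝ) : eNorm x ^ 2 = ∑ i, x i ^ 2 :=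
  Real.sq_sqrt (Finset.sum_nonneg fun _ _ => sq_nonneg _)

lemma matrixSpectralNorm_nonneg [DecidableEq n] (A : Matrix m n ℝ) : 0 ≤ matrixSpectralNorm A :=
  norm_nonneg _

lemma eNorm_mulVec_le [DecidableEq n] (A : Matrix m n ℝ) (v : n → ℝ) :
    eNorm (A.mulVec v) ≤ matrixSpectralNorm A * eNorm v := by
  have h := Matrix.l2_opNorm_mulVec A ((WithLp.equiv 2 (n → ℝ)).symm v)
  simpa [eNorm_eq_norm, spectral_def] using h

lemma matrixSpectralNorm_le_of_forall [DecidableEq n] (A : Matrix m n ℝ) {c : ℝ} (hc : 0 ≤ c)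
    (h : ∀ v, eNorm (A.mulVec v) ≤ c * eNorm v) : matrixSpectralNorm A ≤ c := by
  rw [spectral_def, Matrix.l2_opNorm_def]
  refine ContinuousLinearMap.opNorm_le_bound _ hc fun x => ?_
  have h2 := h (WithLp.equiv 2 (n → ℝ) x)
  rw [eNorm_eq_norm, eNorm_eq_norm, Equiv.symm_apply_apply] at h2
  simpa [Matrix.toEuclideanLin_apply] using h2

lemma matrixSpectralNorm_mul_le [DecidableEq n] [DecidableEq k] (A : Matrix m n ℝ) (B : Matrix n k ℝ) :
    matrixSpectralNorm (A * B) ≤ matrixSpectralNorm A * matrixSpectralNorm B := by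
  simpa [spectral_def] using Matrix.l2_opNorm_mul A B

lemma matrixSpectralNorm_transpose [DecidableEq m] [DecidableEq n] (A : Matrix m n ℝ) :
    matrixSpectralNorm Aᵀ = matrixSpectralNorm A := by
  have hAT : Aᵀ = Aᴴ := by ext i j; simp [Matrix.conjTranspose_apply]
  rw [hAT, spectral_def, spectral_def, Matrix.l2_opNorm_conjTranspose]

lemma eNorm_diagonal_mulVec_le [DecidableEq n] {dg : n → ℝ} {c : ℝ} (hc : 0 ≤ c)
    (h : ∀ i, |dg i| ≤ c) (v : n → ℝ) :
    eNorm ((Matrix.diagonal dg).mulVec v) ≤ c * eNorm v := by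
  rw [eNorm, eNorm, ← Real.sqrt_sq hc, ← Real.sqrt_mul (sq_nonneg c)]
  apply Real.sqrt_le_sqrt
  rw [Finset.mul_sum]
  apply Finset.sum_le_sum
  intro i _
  rw [Matrix.mulVec_diagonal, mul_pow]
  have hdi : dg i ^ 2 ≤ c ^ 2 := by
    rw [← sq_abs]; exact pow_le_pow_left₀ (abs_nonneg _) (h i) 2
  nlinarith [sq_nonneg (v i)]

lemma matrixSpectralNorm_one_le [DecidableEq n] : matrixSpectralNorm (1 : Matrix n n ℝ) ≤ 1 := by
  refine matrixSpectralNorm_le_of_forall _ zero_le_one fun v => ?_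
  rw [Matrix.one_mulVec, one_mul]

lemma frobA {K : Type*} [Fintype K] [DecidableEq K] (pv : K → ℝ)
    (hpv : ∀ j, 0 ≤ pv j) (hpsum : ∑ j, pv j = 1) :
    ∑ i, ∑ j, ((Matrix.diagonal pv - Matrix.vecMulVec pv pv) i j) ^ 2 ≤ 2 := by
  have hp1 : ∀ i, pv i ≤ 1 := by
    intro i
    rw [← hpsum]
    exact Finset.single_le_sum (fun j _ => hpv j) (Finset.mem_univ i)
  have hs2 : ∑ i, pv i ^ 2 ≤ 1 := by
    calc ∑ i, pv i ^ 2 ≤ ∑ i, pv i := by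
          apply Finset.sum_le_sum
          intro i _
          nlinarith [hpv i, hp1 i]
      _ = 1 := hpsum
  have hentry : ∀ i j, ((Matrix.diagonal pv - Matrix.vecMulVec pv pv) i j) ^ 2
      = pv i ^ 2 * ((if i = j then (1:ℝ) else 0) - pv j) ^ 2 := by
    intro i j
    by_cases h : i = j <;>
      simp [Matrix.sub_apply, Matrix.diagonal_apply, Matrix.vecMulVec_apply, h] <;> ring
  have hinner : ∀ i, ∑ j, ((if i = j then (1:ℝ) else 0) - pv j) ^ 2 ≤ 2 := by
    intro i
    have e : ∀ j, ((if i = j then (1:ℝ) else 0) - pv j) ^ 2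
        = (if i = j then (1 - 2 * pv j) else 0) + pv j ^ 2 := by
      intro j; by_cases h : i = j <;> simp [h] <;> ring
    rw [Finset.sum_congr rfl fun j _ => e j, Finset.sum_add_distrib, Finset.sum_ite_eq]
    simp only [Finset.mem_univ, if_true]
    nlinarith [hpv i, hs2]
  calc ∑ i, ∑ j, ((Matrix.diagonal pv - Matrix.vecMulVec pv pv) i j) ^ 2
      = ∑ i, pv i ^ 2 * ∑ j, ((if i = j then (1:ℝ) else 0) - pv j) ^ 2 := by
        apply Finset.sum_congr rfl
        intro i _
        rw [Finset.mul_sum]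
        exact Finset.sum_congr rfl fun j _ => hentry i j
    _ ≤ ∑ i, pv i ^ 2 * 2 := by
        apply Finset.sum_le_sum
        intro i _
        exact mul_le_mul_of_nonneg_left (hinner i) (sq_nonneg _)
    _ = 2 * ∑ i, pv i ^ 2 := by rw [← Finset.sum_mul]; ring
    _ ≤ 2 := by nlinarith [hs2]

lemma eNorm_mulVec_le_frob (A : Matrix m n ℝ) (v : n → ℝ) :
    eNorm (A.mulVec v) ≤ Real.sqrt (∑ i, ∑ j, A i j ^ 2) * eNorm v := by
  rw [eNorm, eNorm, ← Real.sqrt_mul (by positivity)]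
  apply Real.sqrt_le_sqrt
  rw [Finset.sum_mul]
  apply Finset.sum_le_sum
  intro i _
  rw [Finset.sum_mul]
  calc (A.mulVec v i) ^ 2 = (∑ j, A i j * v j) ^ 2 := by
        simp [Matrix.mulVec, dotProduct]
    _ ≤ (∑ j, A i j ^ 2) * ∑ j, v j ^ 2 := Finset.sum_mul_sq_le_sq_mul_sq _ _ _
    _ = ∑ j, A i j ^ 2 * ∑ j', v j' ^ 2 := by rw [Finset.sum_mul]

lemma matrixSpectralNorm_A_le {K : Type*} [Fintype K] [DecidableEq K] (pv : K → ℝ)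
    (hpv : ∀ j, 0 ≤ pv j) (hpsum : ∑ j, pv j = 1) :
    matrixSpectralNorm (Matrix.diagonal pv - Matrix.vecMulVec pv pv) ≤ Real.sqrt 2 := by
  refine matrixSpectralNorm_le_of_forall _ (Real.sqrt_nonneg _) fun v => ?_
  calc eNorm ((Matrix.diagonal pv - Matrix.vecMulVec pv pv).mulVec v)
      ≤ Real.sqrt (∑ i, ∑ j, ((Matrix.diagonal pv - Matrix.vecMulVec pv pv) i j) ^ 2) * eNorm v :=
        eNorm_mulVec_le_frob _ v
    _ ≤ Real.sqrt 2 * eNorm v := by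
        apply mul_le_mul_of_nonneg_right _ (eNorm_nonneg v)
        exact Real.sqrt_le_sqrt (frobA pv hpv hpsum)

end Aux

/-- **Theorem 1.**  Spectral-norm bound for the G-term Hessian approximation
`H = Fᵀ A F` of the cross-entropy loss of an `L`-layer fully connected ReLU
network without bias terms.

Indexing convention (avoiding subtraction): for `q = 0, …, L-1`,
`W q` is the paper's `W⁽q⁺¹⁾ ∈ ℝ^{d_{q+1} × d_q}`, `xv q` is the paper's
`x⁽q⁺¹⁾` (so `xv 0 = x` is the input), `zv q` is the paper's `z⁽q⁺¹⁾`, and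
`Dm q` is the paper's `D⁽q⁺¹⁾`.  For `q = 1, …, L`, `G q` is the paper's
`G⁽q⁾`; `G L = I` and `G q = G (q+1) * W⁽q⁺¹⁾ * D⁽q⁾` for `q < L`.
`Ft` is the paper's `Fᵀ`: its rows are indexed by a block `ℓ : Fin L`
(the paper's layer `p = ℓ+1`) together with either an index into
`(G⁽ᵖ⁾)ᵀ ⊗ x⁽ᵖ⁾` (a pair, since `x⁽ᵖ⁾` is a one-column matrix) or an index
into `(G⁽ᵖ⁾)ᵀ`.  The number of classes is `K = d L`. -/
theorem spectral_norm_bound_of_G_term_hessian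
    (L : ℕ) (hL : 1 ≤ L)
    (d : ℕ → ℕ) (hd : ∀ q ≤ L, 0 < d q)
    (W : (q : ℕ) → Matrix (Fin (d (q + 1))) (Fin (d q)) ℝ)
    (xv : (q : ℕ) → Fin (d q) → ℝ)
    (zv : (q : ℕ) → Fin (d (q + 1)) → ℝ)
    (hz : ∀ q < L, zv q = (W q).mulVec (xv q))
    (Dm : (q : ℕ) → Matrix (Fin (d (q + 1))) (Fin (d (q + 1))) ℝ)
    (hD : ∀ q < L, Dm q = Matrix.diagonal fun i => if 0 ≤ zv q i then (1 : ℝ) else 0)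
    (hxrec : ∀ q < L, xv (q + 1) = (Dm q).mulVec (zv q))
    (G : (q : ℕ) → Matrix (Fin (d L)) (Fin (d q)) ℝ)
    (hGL : G L = 1)
    (hG : ∀ q, q + 1 < L → G (q + 1) = G (q + 2) * W (q + 1) * Dm q)
    (Ft : Matrix ((ℓ : Fin L) × ((Fin (d (ℓ.1 + 1)) × Fin (d ℓ.1)) ⊕ Fin (d (ℓ.1 + 1))))
      (Fin (d L)) ℝ)
    (hFt1 : ∀ (ℓ : Fin L) (i : Fin (d (ℓ.1 + 1))) (a : Fin (d ℓ.1)) (j : Fin (d L)),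
      Ft ⟨ℓ, Sum.inl (i, a)⟩ j = (G (ℓ.1 + 1))ᵀ i j * xv ℓ.1 a)
    (hFt2 : ∀ (ℓ : Fin L) (i : Fin (d (ℓ.1 + 1))) (j : Fin (d L)),
      Ft ⟨ℓ, Sum.inr i⟩ j = (G (ℓ.1 + 1))ᵀ i j)
    (pv : Fin (d L) → ℝ) (hpv : ∀ j, 0 ≤ pv j) (hpsum : ∑ j, pv j = 1)
    (MW Mx : ℝ) (hMW : 1 < MW)
    (hW : ∀ q < L, matrixSpectralNorm (W q) ≤ MW)
    (hx : eNorm (xv 0) ≤ Mx) :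
    matrixSpectralNorm (Ft * (Matrix.diagonal pv - Matrix.vecMulVec pv pv) * Ftᵀ) ≤
      (L : ℝ) * Real.sqrt 2 * Mx ^ 2 * MW ^ (2 * L)
        + Real.sqrt 2 * (MW ^ 2 * (MW ^ (2 * L) - 1) / (MW ^ 2 - 1)) := by
  have hMW0 : (0:ℝ) ≤ MW := by linarith
  have hMW1 : (1:ℝ) ≤ MW := le_of_lt hMW
  have hMx0 : 0 ≤ Mx := le_trans (eNorm_nonneg _) hx
  -- spectral norm of the ReLU pattern matrices
  have hDspec : ∀ q, q < L → matrixSpectralNorm (Dm q) ≤ 1 := by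
    intro q hq
    rw [hD q hq]
    refine matrixSpectralNorm_le_of_forall _ zero_le_one ?_
    intro v
    refine eNorm_diagonal_mulVec_le zero_le_one ?_ v
    intro i
    split <;> simp
  -- spectral norm of the G matrices
  have hGspec : ∀ k q, q + 1 + k = L → matrixSpectralNorm (G (q + 1)) ≤ MW ^ k := by
    intro k
    induction k with
    | zero =>
      intro q h
      subst h
      rw [hGL, pow_zero]
      exact matrixSpectralNorm_one_le
    | succ k ih =>
      intro q h
      have hq1 : q + 1 < L := by omega
      have hq : q < L := by omega
      rw [hG q hq1]
      calc matrixSpectralNorm (G (q + 2) * W (q + 1) * Dm q)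
          ≤ matrixSpectralNorm (G (q + 2) * W (q + 1)) * matrixSpectralNorm (Dm q) :=
            matrixSpectralNorm_mul_le _ _
        _ ≤ matrixSpectralNorm (G (q + 2) * W (q + 1)) * 1 :=
            mul_le_mul_of_nonneg_left (hDspec q hq) (matrixSpectralNorm_nonneg _)
        _ = matrixSpectralNorm (G (q + 2) * W (q + 1)) := mul_one _
        _ ≤ matrixSpectralNorm (G (q + 2)) * matrixSpectralNorm (W (q + 1)) := matrixSpectralNorm_mul_le _ _
        _ ≤ MW ^ k * MW := by
            apply mul_le_mul (ih (q + 1) (by omega)) (hW (q + 1) hq1)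
              (matrixSpectralNorm_nonneg _) (pow_nonneg hMW0 _)
        _ = MW ^ (k + 1) := (pow_succ MW k).symm
  -- bound on activations
  have hxb : ∀ q, q < L → eNorm (xv q) ≤ MW ^ q * Mx := by
    intro q
    induction q with
    | zero => intro _; rw [pow_zero, one_mul]; exact hx
    | succ q ih =>
      intro hq1
      have hq : q < L := by omega
      rw [hxrec q hq, hz q hq]
      calc eNorm ((Dm q).mulVec ((W q).mulVec (xv q)))
          ≤ 1 * eNorm ((W q).mulVec (xv q)) := by
            rw [hD q hq]
            refine eNorm_diagonal_mulVec_le zero_le_one ?_ _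
            intro i; split <;> simp
        _ = eNorm ((W q).mulVec (xv q)) := one_mul _
        _ ≤ matrixSpectralNorm (W q) * eNorm (xv q) := eNorm_mulVec_le _ _
        _ ≤ MW * (MW ^ q * Mx) := by
            apply mul_le_mul (hW q hq) (ih hq) (eNorm_nonneg _) hMW0
        _ = MW ^ (q + 1) * Mx := by ring
  -- the big sum bound on Ft
  set T : ℝ := ∑ ℓ : Fin L, MW ^ (2 * (L - (ℓ.1 + 1))) with hT
  set S : ℝ := (L : ℝ) * Mx ^ 2 * MW ^ (2 * (L - 1)) + T with hSdef
  have hT0 : 0 ≤ T := Finset.sum_nonneg fun ℓ _ => pow_nonneg hMW0 _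
  have hS0 : 0 ≤ S := by
    apply add_nonneg _ hT0
    apply mul_nonneg (mul_nonneg (Nat.cast_nonneg L) (sq_nonneg Mx)) (pow_nonneg hMW0 _)
  have hFtb : matrixSpectralNorm Ft ≤ Real.sqrt S := by
    refine matrixSpectralNorm_le_of_forall _ (Real.sqrt_nonneg _) fun v => ?_
    set u : (ℓ : Fin L) → Fin (d (ℓ.1 + 1)) → ℝ := fun ℓ => ((G (ℓ.1 + 1))ᵀ).mulVec v with hu
    have hrow1 : ∀ (ℓ : Fin L) (i : Fin (d (ℓ.1 + 1))) (a : Fin (d ℓ.1)),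
        Ft.mulVec v ⟨ℓ, Sum.inl (i, a)⟩ = u ℓ i * xv ℓ.1 a := by
      intro ℓ i a
      have hui : u ℓ i = ∑ j, (G (ℓ.1 + 1))ᵀ i j * v j := rfl
      simp only [Matrix.mulVec, dotProduct, hFt1, hui, Finset.sum_mul]
      apply Finset.sum_congr rfl
      intro j _
      ring
    have hrow2 : ∀ (ℓ : Fin L) (i : Fin (d (ℓ.1 + 1))),
        Ft.mulVec v ⟨ℓ, Sum.inr i⟩ = u ℓ i := by
      intro ℓ i
      simp only [Matrix.mulVec, dotProduct, hFt2]
      rfl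
    have hblock : ∀ ℓ : Fin L,
        ∑ s : (Fin (d (ℓ.1 + 1)) × Fin (d ℓ.1)) ⊕ Fin (d (ℓ.1 + 1)),
          (Ft.mulVec v ⟨ℓ, s⟩) ^ 2
        = (eNorm (xv ℓ.1) ^ 2 + 1) * eNorm (u ℓ) ^ 2 := by
      intro ℓ
      rw [Fintype.sum_sum_type]
      have h1 : ∑ p : Fin (d (ℓ.1 + 1)) × Fin (d ℓ.1), (Ft.mulVec v ⟨ℓ, Sum.inl p⟩) ^ 2
          = (∑ i, u ℓ i ^ 2) * ∑ a, xv ℓ.1 a ^ 2 := by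
        rw [Fintype.sum_prod_type, Finset.sum_mul]
        apply Finset.sum_congr rfl
        intro i _
        rw [Finset.mul_sum]
        apply Finset.sum_congr rfl
        intro a _
        rw [hrow1]
        ring
      have h2 : ∑ i, (Ft.mulVec v ⟨ℓ, Sum.inr i⟩) ^ 2 = ∑ i, u ℓ i ^ 2 :=
        Finset.sum_congr rfl fun i _ => by rw [hrow2]
      rw [h1, h2, eNorm_sq, eNorm_sq]
      ring
    have hFtv : eNorm (Ft.mulVec v) ^ 2
        = ∑ ℓ : Fin L, (eNorm (xv ℓ.1) ^ 2 + 1) * eNorm (u ℓ) ^ 2 := by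
      rw [eNorm_sq, ← Finset.univ_sigma_univ, Finset.sum_sigma]
      exact Finset.sum_congr rfl fun ℓ _ => hblock ℓ
    -- termwise bound
    have hterm : ∀ ℓ : Fin L, (eNorm (xv ℓ.1) ^ 2 + 1) * eNorm (u ℓ) ^ 2
        ≤ (Mx ^ 2 * MW ^ (2 * (L - 1)) + MW ^ (2 * (L - (ℓ.1 + 1)))) * eNorm v ^ 2 := by
      intro ℓ
      have hℓ : ℓ.1 < L := ℓ.2
      have hux : eNorm (u ℓ) ≤ MW ^ (L - (ℓ.1 + 1)) * eNorm v := by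
        calc eNorm (u ℓ) ≤ matrixSpectralNorm (G (ℓ.1 + 1))ᵀ * eNorm v := eNorm_mulVec_le _ _
          _ = matrixSpectralNorm (G (ℓ.1 + 1)) * eNorm v := by rw [matrixSpectralNorm_transpose]
          _ ≤ MW ^ (L - (ℓ.1 + 1)) * eNorm v := by
              apply mul_le_mul_of_nonneg_right _ (eNorm_nonneg _)
              exact hGspec (L - (ℓ.1 + 1)) ℓ.1 (by omega)
      have hu2 : eNorm (u ℓ) ^ 2 ≤ (MW ^ (L - (ℓ.1 + 1))) ^ 2 * eNorm v ^ 2 := by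
        rw [← mul_pow]
        exact pow_le_pow_left₀ (eNorm_nonneg _) hux 2
      have hx2 : eNorm (xv ℓ.1) ^ 2 ≤ (MW ^ ℓ.1) ^ 2 * Mx ^ 2 := by
        rw [← mul_pow]
        exact pow_le_pow_left₀ (eNorm_nonneg _) (hxb ℓ.1 hℓ) 2
      have hpowprod : (MW ^ ℓ.1) ^ 2 * (MW ^ (L - (ℓ.1 + 1))) ^ 2 = MW ^ (2 * (L - 1)) := by
        rw [← pow_mul, ← pow_mul, ← pow_add]
        congr 1
        omega
      have hpow2 : (MW ^ (L - (ℓ.1 + 1))) ^ 2 = MW ^ (2 * (L - (ℓ.1 + 1))) := by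
        rw [← pow_mul]
        congr 1
        omega
      calc (eNorm (xv ℓ.1) ^ 2 + 1) * eNorm (u ℓ) ^ 2
          ≤ ((MW ^ ℓ.1) ^ 2 * Mx ^ 2 + 1) * ((MW ^ (L - (ℓ.1 + 1))) ^ 2 * eNorm v ^ 2) := by
            apply mul_le_mul _ hu2 (sq_nonneg _) _
            · linarith [hx2]
            · positivity
        _ = (Mx ^ 2 * MW ^ (2 * (L - 1)) + MW ^ (2 * (L - (ℓ.1 + 1)))) * eNorm v ^ 2 := by
            rw [← hpow2, ← hpowprod]
            ring
    have hFtv2 : eNorm (Ft.mulVec v) ^ 2 ≤ S * eNorm v ^ 2 := by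
      rw [hFtv, hSdef, hT]
      calc ∑ ℓ : Fin L, (eNorm (xv ℓ.1) ^ 2 + 1) * eNorm (u ℓ) ^ 2
          ≤ ∑ ℓ : Fin L, (Mx ^ 2 * MW ^ (2 * (L - 1)) + MW ^ (2 * (L - (ℓ.1 + 1)))) * eNorm v ^ 2 :=
            Finset.sum_le_sum fun ℓ _ => hterm ℓ
        _ = ((L : ℝ) * Mx ^ 2 * MW ^ (2 * (L - 1)) + ∑ ℓ : Fin L, MW ^ (2 * (L - (ℓ.1 + 1))))
              * eNorm v ^ 2 := by
            rw [← Finset.sum_mul]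
            congr 1
            rw [Finset.sum_add_distrib, Finset.sum_const, Finset.card_univ, Fintype.card_fin]
            push_cast
            ring
    calc eNorm (Ft.mulVec v) = Real.sqrt (eNorm (Ft.mulVec v) ^ 2) :=
          (Real.sqrt_sq (eNorm_nonneg _)).symm
      _ ≤ Real.sqrt (S * eNorm v ^ 2) := Real.sqrt_le_sqrt hFtv2
      _ = Real.sqrt S * eNorm v := by
          rw [Real.sqrt_mul hS0, Real.sqrt_sq (eNorm_nonneg _)]
  -- assemble
  have hA : matrixSpectralNorm (Matrix.diagonal pv - Matrix.vecMulVec pv pv) ≤ Real.sqrt 2 :=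
    matrixSpectralNorm_A_le pv hpv hpsum
  have hmain : matrixSpectralNorm (Ft * (Matrix.diagonal pv - Matrix.vecMulVec pv pv) * Ftᵀ)
      ≤ Real.sqrt 2 * S := by
    calc matrixSpectralNorm (Ft * (Matrix.diagonal pv - Matrix.vecMulVec pv pv) * Ftᵀ)
        ≤ matrixSpectralNorm (Ft * (Matrix.diagonal pv - Matrix.vecMulVec pv pv)) * matrixSpectralNorm Ftᵀ :=
          matrixSpectralNorm_mul_le _ _
      _ ≤ (matrixSpectralNorm Ft * matrixSpectralNorm (Matrix.diagonal pv - Matrix.vecMulVec pv pv))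
            * matrixSpectralNorm Ftᵀ := by
          apply mul_le_mul_of_nonneg_right (matrixSpectralNorm_mul_le _ _) (matrixSpectralNorm_nonneg _)
      _ ≤ (Real.sqrt S * Real.sqrt 2) * Real.sqrt S := by
          apply mul_le_mul _ _ (matrixSpectralNorm_nonneg _) (by positivity)
          · exact mul_le_mul hFtb hA (matrixSpectralNorm_nonneg _) (Real.sqrt_nonneg _)
          · rw [matrixSpectralNorm_transpose]; exact hFtb
      _ = Real.sqrt 2 * (Real.sqrt S * Real.sqrt S) := by ring
      _ = Real.sqrt 2 * S := by rw [Real.mul_self_sqrt hS0]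
  -- geometric sum
  have hMW2ne : MW ^ 2 ≠ 1 := by nlinarith
  have hTgeom : T = (MW ^ (2 * L) - 1) / (MW ^ 2 - 1) := by
    rw [hT]
    rw [Fin.sum_univ_eq_sum_range (fun i => MW ^ (2 * (L - (i + 1)))) L]
    have e : ∀ i ∈ Finset.range L, MW ^ (2 * (L - (i + 1))) = (MW ^ 2) ^ (L - 1 - i) := by
      intro i _
      rw [← pow_mul]
      congr 1
      omega
    rw [Finset.sum_congr rfl e, Finset.sum_range_reflect (fun j => (MW ^ 2) ^ j) L,
      geom_sum_eq hMW2ne, ← pow_mul]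
  have hnum : (0:ℝ) ≤ MW ^ (2 * L) - 1 := by
    linarith [one_le_pow₀ hMW1 (n := 2 * L)]
  have hden : (0:ℝ) < MW ^ 2 - 1 := by nlinarith
  have hTle : T ≤ MW ^ 2 * (MW ^ (2 * L) - 1) / (MW ^ 2 - 1) := by
    have h1MW2 : (1:ℝ) ≤ MW ^ 2 := by nlinarith
    rw [hTgeom, div_le_div_iff₀ hden hden]
    exact mul_le_mul_of_nonneg_right (le_mul_of_one_le_left hnum h1MW2) (le_of_lt hden)
  have hpowle : MW ^ (2 * (L - 1)) ≤ MW ^ (2 * L) :=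
    pow_le_pow_right₀ hMW1 (by omega)
  calc matrixSpectralNorm (Ft * (Matrix.diagonal pv - Matrix.vecMulVec pv pv) * Ftᵀ)
      ≤ Real.sqrt 2 * S := hmain
    _ = (L : ℝ) * Real.sqrt 2 * Mx ^ 2 * MW ^ (2 * (L - 1)) + Real.sqrt 2 * T := by
        rw [hSdef]; ring
    _ ≤ (L : ℝ) * Real.sqrt 2 * Mx ^ 2 * MW ^ (2 * L)
          + Real.sqrt 2 * (MW ^ 2 * (MW ^ (2 * L) - 1) / (MW ^ 2 - 1)) := by
        apply add_le_add
        · apply mul_le_mul_of_nonneg_left hpowle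
          positivity
        · exact mul_le_mul_of_nonneg_left hTle (Real.sqrt_nonneg _)
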